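/- Let d ≥ 2, α ∈ ℝ, and for r ∈ (−1,1) define f(r, d, α) = ∫_0^π sin^d θ / (r² + 1 − 2r cos θ)^{(d+α)/2} dθ. Then ∂²_r f(r, d, α) = (d+α)[(d+α+1) f(r, d, α+2) − (d+α+2) f(r, d+2, α+2)]. -/

import Mathlib

open Real intervalIntegral

private lemma gpos {s : ℝ} (hs : |s| < 1) (θ : ℝ) :
    0 < s ^ 2 + 1 - 2 * s * Real.cos θ := by
  have h1 : s * Real.cos θ ≤ |s| := by
    calc s * Real.cos θ ≤ |s * Real.cos θ| := le_abs_self _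
    _ = |s| * |Real.cos θ| := abs_mul _ _
    _ ≤ |s| * 1 := mul_le_mul_of_nonneg_left (Real.abs_cos_le_one θ) (abs_nonneg s)
    _ = |s| := mul_one _
  have h2 : 0 < (1 - |s|) ^ 2 := pow_pos (by linarith) 2
  nlinarith [sq_abs s]

private lemma glb {s θ M : ℝ} (hsM : |s| ≤ M) (hM : M < 1) :
    (1 - M) ^ 2 ≤ s ^ 2 + 1 - 2 * s * Real.cos θ := by
  have h1 : s * Real.cos θ ≤ |s| := by
    calc s * Real.cos θ ≤ |s * Real.cos θ| := le_abs_self _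
    _ = |s| * |Real.cos θ| := abs_mul _ _
    _ ≤ |s| * 1 := mul_le_mul_of_nonneg_left (Real.abs_cos_le_one θ) (abs_nonneg s)
    _ = |s| := mul_one _
  have h2 : 0 ≤ |s| := abs_nonneg s
  nlinarith [sq_abs s, mul_nonneg (sub_nonneg.mpr hsM) (by linarith : (0:ℝ) ≤ 2 - |s| - M)]

private lemma gub {s θ : ℝ} (hs : |s| ≤ 1) :
    s ^ 2 + 1 - 2 * s * Real.cos θ ≤ 4 := by
  have h1 : -(s * Real.cos θ) ≤ |s| := by
    calc -(s * Real.cos θ) ≤ |s * Real.cos θ| := neg_le_abs _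
    _ = |s| * |Real.cos θ| := abs_mul _ _
    _ ≤ |s| * 1 := mul_le_mul_of_nonneg_left (Real.abs_cos_le_one θ) (abs_nonneg s)
    _ = |s| := mul_one _
  nlinarith [sq_abs s, abs_nonneg s]

private lemma rpow_bound {c x : ℝ} (hc : 0 < c) (h1 : c ≤ x) (h2 : x ≤ 4) (e : ℝ) :
    x ^ e ≤ c ^ e + 4 ^ e := by
  rcases le_or_gt 0 e with he | he
  · have h3 := Real.rpow_le_rpow (by linarith) h2 he
    have h0 : (0:ℝ) ≤ c ^ e := Real.rpow_nonneg hc.le e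
    linarith
  · have h3 := Real.rpow_le_rpow_of_nonpos hc h1 he.le
    have h0 : (0:ℝ) ≤ (4:ℝ) ^ e := Real.rpow_nonneg (by norm_num) e
    linarith

private lemma contg {s : ℝ} (hs : |s| < 1) (e : ℝ) :
    Continuous fun θ : ℝ => (s ^ 2 + 1 - 2 * s * Real.cos θ) ^ e := by
  apply Continuous.rpow_const (by fun_prop)
  exact fun θ => Or.inl (gpos hs θ).ne'

private lemma keyDeriv (d k : ℕ) (e : ℝ) {r : ℝ} (hr : |r| < 1) :
    HasDerivAt (fun s : ℝ => ∫ θ in (0:ℝ)..π,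
        Real.sin θ ^ d * ((2 * s - 2 * Real.cos θ) ^ k * (s ^ 2 + 1 - 2 * s * Real.cos θ) ^ e))
      (∫ θ in (0:ℝ)..π, Real.sin θ ^ d *
        ((↑k * (2 * r - 2 * Real.cos θ) ^ (k - 1) * 2) * (r ^ 2 + 1 - 2 * r * Real.cos θ) ^ e
          + (2 * r - 2 * Real.cos θ) ^ k *
            ((2 * r - 2 * Real.cos θ) * e * (r ^ 2 + 1 - 2 * r * Real.cos θ) ^ (e - 1)))) r := by
  set ε : ℝ := (1 - |r|) / 2 with hεdef
  have hε0 : 0 < ε := by have := abs_nonneg r; simp only [hεdef]; linarith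
  set M : ℝ := (1 + |r|) / 2 with hMdef
  have hM1 : M < 1 := by simp only [hMdef]; linarith
  have hM0 : 0 < 1 - M := by linarith
  set c : ℝ := (1 - M) ^ 2 with hcdef
  have hc : 0 < c := pow_pos hM0 2
  have hball : ∀ x ∈ Metric.ball r ε, |x| ≤ M := by
    intro x hx
    have hd := Metric.mem_ball.mp hx
    rw [Real.dist_eq] at hd
    have h1 : |x| ≤ |r| + |x - r| := by
      calc |x| = |r + (x - r)| := by ring_nf
      _ ≤ |r| + |x - r| := abs_add_le _ _
    simp only [hMdef]; simp only [hεdef] at hd; linarith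
  set B : ℝ := (↑k * 4 ^ (k - 1) * 2) * (c ^ e + 4 ^ e)
      + 4 ^ k * (4 * |e| * (c ^ (e - 1) + 4 ^ (e - 1))) with hBdef
  have main := intervalIntegral.hasDerivAt_integral_of_dominated_loc_of_deriv_le
    (F := fun s θ => Real.sin θ ^ d *
        ((2 * s - 2 * Real.cos θ) ^ k * (s ^ 2 + 1 - 2 * s * Real.cos θ) ^ e))
    (F' := fun s θ => Real.sin θ ^ d *
        ((↑k * (2 * s - 2 * Real.cos θ) ^ (k - 1) * 2) * (s ^ 2 + 1 - 2 * s * Real.cos θ) ^ e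
          + (2 * s - 2 * Real.cos θ) ^ k *
            ((2 * s - 2 * Real.cos θ) * e * (s ^ 2 + 1 - 2 * s * Real.cos θ) ^ (e - 1))))
    (bound := fun _ => B) (a := (0:ℝ)) (b := π) (x₀ := r) (μ := MeasureTheory.volume) (Metric.ball_mem_nhds r hε0) ?_ ?_ ?_ ?_ ?_ ?_
  · exact main.2
  · filter_upwards [Metric.ball_mem_nhds r hε0] with x hx
    have hx1 : |x| < 1 := lt_of_le_of_lt (hball x hx) hM1
    exact ((Real.continuous_sin.pow d).mul
      ((by fun_prop : Continuous fun θ : ℝ => (2 * x - 2 * Real.cos θ) ^ k).mul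
        (contg hx1 e))).aestronglyMeasurable
  · exact ((Real.continuous_sin.pow d).mul
      ((by fun_prop : Continuous fun θ : ℝ => (2 * r - 2 * Real.cos θ) ^ k).mul
        (contg hr e))).intervalIntegrable _ _
  · exact ((Real.continuous_sin.pow d).mul
      (((by fun_prop : Continuous fun θ : ℝ =>
          (↑k * (2 * r - 2 * Real.cos θ) ^ (k - 1) * 2)).mul (contg hr e)).add
        ((by fun_prop : Continuous fun θ : ℝ => (2 * r - 2 * Real.cos θ) ^ k).mul
          ((by fun_prop : Continuous fun θ : ℝ => (2 * r - 2 * Real.cos θ) * e).mul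
            (contg hr (e - 1)))))).aestronglyMeasurable
  · apply MeasureTheory.ae_of_all
    intro θ _ x hx
    have hxM := hball x hx
    have hx1 : |x| < 1 := lt_of_le_of_lt hxM hM1
    have hgl : c ≤ x ^ 2 + 1 - 2 * x * Real.cos θ := glb hxM hM1
    have hgu : x ^ 2 + 1 - 2 * x * Real.cos θ ≤ 4 := gub hx1.le
    have hgp : 0 < x ^ 2 + 1 - 2 * x * Real.cos θ := lt_of_lt_of_le hc hgl
    have hsin : |Real.sin θ ^ d| ≤ 1 := by
      rw [abs_pow]; exact pow_le_one₀ (abs_nonneg _) (Real.abs_sin_le_one θ)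
    have h2x : |2 * x - 2 * Real.cos θ| ≤ 4 := by
      have hc1 := Real.abs_cos_le_one θ
      calc |2 * x - 2 * Real.cos θ| ≤ |2 * x| + |2 * Real.cos θ| := abs_sub _ _
      _ = 2 * |x| + 2 * |Real.cos θ| := by rw [abs_mul, abs_mul]; norm_num
      _ ≤ 4 := by linarith [hx1.le]
    have hge := rpow_bound hc hgl hgu e
    have hge1 := rpow_bound hc hgl hgu (e - 1)
    have hgen : 0 ≤ (x ^ 2 + 1 - 2 * x * Real.cos θ) ^ e := Real.rpow_nonneg hgp.le e
    have hgen1 : 0 ≤ (x ^ 2 + 1 - 2 * x * Real.cos θ) ^ (e - 1) := Real.rpow_nonneg hgp.le _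
    have hce : (0:ℝ) ≤ c ^ e + 4 ^ e :=
      add_nonneg (Real.rpow_nonneg hc.le e) (Real.rpow_nonneg (by norm_num) e)
    have hce1 : (0:ℝ) ≤ c ^ (e - 1) + 4 ^ (e - 1) :=
      add_nonneg (Real.rpow_nonneg hc.le _) (Real.rpow_nonneg (by norm_num) _)
    rw [Real.norm_eq_abs, abs_mul]
    have hA : |(↑k * (2 * x - 2 * Real.cos θ) ^ (k - 1) * 2) *
        (x ^ 2 + 1 - 2 * x * Real.cos θ) ^ e| ≤ (↑k * 4 ^ (k - 1) * 2) * (c ^ e + 4 ^ e) := by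
      rw [abs_mul]
      apply mul_le_mul _ _ (abs_nonneg _) (by positivity)
      · rw [abs_mul, abs_mul, abs_pow, Nat.abs_cast, abs_two]
        gcongr
      · rw [abs_of_nonneg hgen]; exact hge
    have hB : |(2 * x - 2 * Real.cos θ) ^ k *
        ((2 * x - 2 * Real.cos θ) * e * (x ^ 2 + 1 - 2 * x * Real.cos θ) ^ (e - 1))|
        ≤ 4 ^ k * (4 * |e| * (c ^ (e - 1) + 4 ^ (e - 1))) := by
      rw [abs_mul, abs_pow, abs_mul, abs_mul, abs_of_nonneg hgen1]
      apply mul_le_mul _ _ (by positivity) (by positivity)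
      · exact pow_le_pow_left₀ (abs_nonneg _) h2x _
      · apply mul_le_mul _ hge1 hgen1 (by positivity)
        exact mul_le_mul_of_nonneg_right h2x (abs_nonneg e)
    calc |Real.sin θ ^ d| * |_ + _| ≤ 1 * (|_| + |_|) :=
          mul_le_mul hsin (abs_add_le _ _) (abs_nonneg _) zero_le_one
    _ ≤ 1 * ((↑k * 4 ^ (k - 1) * 2) * (c ^ e + 4 ^ e)
          + 4 ^ k * (4 * |e| * (c ^ (e - 1) + 4 ^ (e - 1)))) := by
        apply mul_le_mul_of_nonneg_left (add_le_add hA hB) zero_le_one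
    _ = B := by rw [one_mul]
  · exact intervalIntegrable_const
  · apply MeasureTheory.ae_of_all
    intro θ _ x hx
    have hx1 : |x| < 1 := lt_of_le_of_lt (hball x hx) hM1
    have hgp := gpos hx1 θ
    have hg : HasDerivAt (fun s : ℝ => s ^ 2 + 1 - 2 * s * Real.cos θ)
        (2 * x - 2 * Real.cos θ) x := by
      have h1 := ((hasDerivAt_pow 2 x).add_const 1).fun_sub
        (((hasDerivAt_id x).const_mul 2).mul_const (Real.cos θ))
      exact h1.congr_deriv (by norm_num)
    have hrp := hg.rpow_const (p := e) (Or.inl hgp.ne')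
    have hk : HasDerivAt (fun s : ℝ => (2 * s - 2 * Real.cos θ) ^ k)
        ((↑k * (2 * x - 2 * Real.cos θ) ^ (k - 1)) * 2) x := by
      have h2 : HasDerivAt (fun s : ℝ => 2 * s - 2 * Real.cos θ) 2 x := by
        have := ((hasDerivAt_id x).const_mul 2).sub_const (2 * Real.cos θ)
        simpa using this
      exact h2.pow k
    have := (hk.fun_mul hrp).const_mul (Real.sin θ ^ d)
    convert this using 1 <;> ring

/-- Recurrence for the second derivative of f(r,d,α). -/
theorem stmt_3 (d : ℕ) (hd : 2 ≤ d) (α : ℝ) (r : ℝ) (hr : r ∈ Set.Ioo (-1 : ℝ) 1) :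
    deriv (deriv (fun s : ℝ =>
      ∫ θ in (0:ℝ)..π,
        Real.sin θ ^ d / (s ^ 2 + 1 - 2 * s * Real.cos θ) ^ (((d : ℝ) + α) / 2))) r
    = ((d : ℝ) + α) *
        (((d : ℝ) + α + 1) *
            (∫ θ in (0:ℝ)..π,
              Real.sin θ ^ d / (r ^ 2 + 1 - 2 * r * Real.cos θ) ^ (((d : ℝ) + (α + 2)) / 2))
         - ((d : ℝ) + α + 2) *
            (∫ θ in (0:ℝ)..π,
              Real.sin θ ^ (d + 2) /
                (r ^ 2 + 1 - 2 * r * Real.cos θ) ^ ((((d : ℝ) + 2) + (α + 2)) / 2))) := by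
  obtain ⟨hr1, hr2⟩ := hr
  have hrabs : |r| < 1 := abs_lt.mpr ⟨hr1, hr2⟩
  set q : ℝ := ((d : ℝ) + α) / 2 with hq
  set I₁ : ℝ → ℝ := fun s => ∫ θ in (0:ℝ)..π,
      Real.sin θ ^ d * ((2 * s - 2 * Real.cos θ) ^ 1
        * (s ^ 2 + 1 - 2 * s * Real.cos θ) ^ (-q - 1)) with hI₁
  have claim1 : ∀ s ∈ Set.Ioo (-1:ℝ) 1,
      HasDerivAt (fun s : ℝ => ∫ θ in (0:ℝ)..π,
        Real.sin θ ^ d / (s ^ 2 + 1 - 2 * s * Real.cos θ) ^ q) (-q * I₁ s) s := by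
    intro s hs
    have hs' : |s| < 1 := abs_lt.mpr ⟨hs.1, hs.2⟩
    have h := keyDeriv d 0 (-q) hs'
    have heq : (fun s : ℝ => ∫ θ in (0:ℝ)..π,
        Real.sin θ ^ d / (s ^ 2 + 1 - 2 * s * Real.cos θ) ^ q)
        =ᶠ[nhds s] (fun s : ℝ => ∫ θ in (0:ℝ)..π,
          Real.sin θ ^ d * ((2 * s - 2 * Real.cos θ) ^ 0
            * (s ^ 2 + 1 - 2 * s * Real.cos θ) ^ (-q))) := by
      filter_upwards [Ioo_mem_nhds hs.1 hs.2] with x hx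
      have hx' : |x| < 1 := abs_lt.mpr ⟨hx.1, hx.2⟩
      apply intervalIntegral.integral_congr
      intro θ _
      beta_reduce
      rw [pow_zero, one_mul, Real.rpow_neg (gpos hx' θ).le, div_eq_mul_inv]
    have hval : (∫ θ in (0:ℝ)..π, Real.sin θ ^ d *
        ((↑(0:ℕ) * (2 * s - 2 * Real.cos θ) ^ (0 - 1) * 2)
            * (s ^ 2 + 1 - 2 * s * Real.cos θ) ^ (-q)
          + (2 * s - 2 * Real.cos θ) ^ (0:ℕ) *
            ((2 * s - 2 * Real.cos θ) * (-q)
              * (s ^ 2 + 1 - 2 * s * Real.cos θ) ^ (-q - 1)))) = -q * I₁ s := by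
      rw [hI₁, ← intervalIntegral.integral_const_mul]
      apply intervalIntegral.integral_congr
      intro θ _
      beta_reduce
      simp only [Nat.cast_zero, zero_mul, pow_zero, pow_one, one_mul, zero_add]
      ring
    rw [← hval]
    exact h.congr_of_eventuallyEq heq
  have h2 := keyDeriv d 1 (-q - 1) hrabs
  have h3 : deriv (deriv (fun s : ℝ => ∫ θ in (0:ℝ)..π,
      Real.sin θ ^ d / (s ^ 2 + 1 - 2 * s * Real.cos θ) ^ q)) r
      = deriv (fun s => -q * I₁ s) r := by
    apply Filter.EventuallyEq.deriv_eq
    filter_upwards [Ioo_mem_nhds hr1 hr2] with x hx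
    exact (claim1 x hx).deriv
  have h4 : deriv (fun s => -q * I₁ s) r = -q * (∫ θ in (0:ℝ)..π, Real.sin θ ^ d *
      ((↑(1:ℕ) * (2 * r - 2 * Real.cos θ) ^ (1 - 1) * 2)
          * (r ^ 2 + 1 - 2 * r * Real.cos θ) ^ (-q - 1)
        + (2 * r - 2 * Real.cos θ) ^ (1:ℕ) *
          ((2 * r - 2 * Real.cos θ) * (-q - 1)
            * (r ^ 2 + 1 - 2 * r * Real.cos θ) ^ (-q - 1 - 1)))) := by
    have := h2.const_mul (-q)
    rw [hI₁]
    exact this.deriv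
  rw [h3, h4]
  have hR1 : (∫ θ in (0:ℝ)..π,
      Real.sin θ ^ d / (r ^ 2 + 1 - 2 * r * Real.cos θ) ^ (((d : ℝ) + (α + 2)) / 2))
      = ∫ θ in (0:ℝ)..π, Real.sin θ ^ d
        * (r ^ 2 + 1 - 2 * r * Real.cos θ) ^ (-q - 1) := by
    apply intervalIntegral.integral_congr
    intro θ _
    beta_reduce
    rw [show ((d : ℝ) + (α + 2)) / 2 = -(-q - 1) by rw [hq]; ring,
      Real.rpow_neg (gpos hrabs θ).le, div_eq_mul_inv, inv_inv]
  have hR2 : (∫ θ in (0:ℝ)..π, Real.sin θ ^ (d + 2)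
      / (r ^ 2 + 1 - 2 * r * Real.cos θ) ^ ((((d : ℝ) + 2) + (α + 2)) / 2))
      = ∫ θ in (0:ℝ)..π, Real.sin θ ^ (d + 2)
        * (r ^ 2 + 1 - 2 * r * Real.cos θ) ^ (-q - 1 - 1) := by
    apply intervalIntegral.integral_congr
    intro θ _
    beta_reduce
    rw [show (((d : ℝ) + 2) + (α + 2)) / 2 = -(-q - 1 - 1) by rw [hq]; ring,
      Real.rpow_neg (gpos hrabs θ).le, div_eq_mul_inv, inv_inv]
  rw [hR1, hR2]
  have hInt1 : IntervalIntegrable (fun θ => ((d : ℝ) + α + 1) * (Real.sin θ ^ d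
      * (r ^ 2 + 1 - 2 * r * Real.cos θ) ^ (-q - 1))) MeasureTheory.volume 0 π :=
    (continuous_const.mul
      ((Real.continuous_sin.pow d).mul (contg hrabs (-q - 1)))).intervalIntegrable _ _
  have hInt2 : IntervalIntegrable (fun θ => ((d : ℝ) + α + 2) * (Real.sin θ ^ (d + 2)
      * (r ^ 2 + 1 - 2 * r * Real.cos θ) ^ (-q - 1 - 1))) MeasureTheory.volume 0 π :=
    (continuous_const.mul
      ((Real.continuous_sin.pow (d + 2)).mul (contg hrabs (-q - 1 - 1)))).intervalIntegrable _ _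
  rw [← intervalIntegral.integral_const_mul, ← intervalIntegral.integral_const_mul,
    ← intervalIntegral.integral_const_mul, ← intervalIntegral.integral_sub hInt1 hInt2,
    ← intervalIntegral.integral_const_mul]
  apply intervalIntegral.integral_congr
  intro θ _
  beta_reduce
  have hg := gpos hrabs θ
  have hX : (r ^ 2 + 1 - 2 * r * Real.cos θ) ^ (-q - 1)
      = (r ^ 2 + 1 - 2 * r * Real.cos θ) ^ (-q - 1 - 1)
        * (r ^ 2 + 1 - 2 * r * Real.cos θ) := by
    rw [← Real.rpow_add_one hg.ne' (-q - 1 - 1)]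
    congr 1
    ring
  have hsc := Real.sin_sq_add_cos_sq θ
  have hda : (d : ℝ) + α = 2 * q := by rw [hq]; ring
  rw [hX, pow_add, hda]
  simp only [Nat.cast_one, one_mul, pow_one, Nat.sub_self, pow_zero]
  linear_combination (4 * q * (q + 1) * Real.sin θ ^ d
    * (r ^ 2 + 1 - 2 * r * Real.cos θ) ^ (-q - 1 - 1)) * hsc
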